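/- (One-iteration inequality for the Bregman primal Condat–Vũ algorithm.) Let x⁰ ∈ interior(dom φ_p), z⁰ ∈ interior(dom φ_d), and suppose x¹ ∈ interior(dom φ_p) and z¹ ∈ interior(dom φ_d) satisfy the Bregman prox optimality inequalities: (i) τ(f(x¹) − f(x)) ≤ d_p(x,x⁰) − d_p(x¹,x⁰) − d_p(x,x¹) + τ⟨Aᵀz⁰ + ∇h(x⁰), x − x¹⟩ for all x ∈ dom f ∩ dom φ_p, and (ii) σ(g*(z¹) − g*(z)) ≤ d_d(z,z⁰) − d_d(z¹,z⁰) − d_d(z,z¹) − σ⟨z − z¹, A(2x¹ − x⁰)⟩ for all z ∈ dom g* ∩ dom φ_d. Then for all x ∈ dom f ∩ dom φ_p and z ∈ dom g* ∩ dom φ_d: 𝓛(x¹, z) − 𝓛(x, z¹) ≤ d_−(x,z;x⁰,z⁰) − d_−(x,z;x¹,z¹) − d_pcv(x¹,z¹;x⁰,z⁰). -/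

import Mathlib

open scoped RealInnerProductSpace

lemma grad_convex_ineq {V : Type*} [NormedAddCommGroup V] [InnerProductSpace ℝ V] [CompleteSpace V]
    {h : V → ℝ} (hconv : ConvexOn ℝ Set.univ h) {x0 g0 : V}
    (hg : HasGradientAt h g0 x0) (x : V) :
    h x0 + ⟪g0, x - x0⟫ ≤ h x := by
  set v := x - x0 with hv
  have hc : HasDerivAt (fun t : ℝ => x0 + t • v) v 0 := by
    simpa using ((hasDerivAt_id (0:ℝ)).smul_const v).const_add x0
  have hψ : HasDerivAt (fun t : ℝ => h (x0 + t • v)) ⟪g0, v⟫ 0 := by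
    have h0 : HasFDerivAt h (InnerProductSpace.toDual ℝ V g0) ((fun t : ℝ => x0 + t • v) 0) := by
      simpa using hg.hasFDerivAt
    convert h0.comp_hasDerivAt 0 hc using 1
    · rfl
    · rfl
    · rfl
    · simp
  have hψc : ConvexOn ℝ Set.univ (fun t : ℝ => h (x0 + t • v)) := by
    have := hconv.comp_affineMap (AffineMap.lineMap x0 x : ℝ →ᵃ[ℝ] V)
    have h2 : ConvexOn ℝ Set.univ fun t : ℝ => h ((1 - t) • x0 + t • x) := by
      simpa [Function.comp_def, AffineMap.lineMap_apply_module] using this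
    have heq : (fun t : ℝ => h (x0 + t • v)) = fun t : ℝ => h ((1 - t) • x0 + t • x) := by
      funext t; congr 1; rw [hv]; module
    rw [heq]; exact h2
  have := hψc.le_slope_of_hasDerivAt (Set.mem_univ 0) (Set.mem_univ 1) one_pos hψ
  simp [slope_def_field, hv] at this
  linarith


/-- Bregman distance generated by kernel `φ` with gradient map `g`. -/
noncomputable def breg {V : Type*} [NormedAddCommGroup V] [InnerProductSpace ℝ V]
    (φ : V → ℝ) (g : V → V) (x x' : V) : ℝ :=
  φ x - φ x' - ⟪g x', x - x'⟫

/-- The primal–dual distance `d₊/d₋` (`s = 1` gives `d₊`, `s = -1` gives `d₋`). -/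
noncomputable def dpm {V W : Type*} [NormedAddCommGroup V] [InnerProductSpace ℝ V]
    [NormedAddCommGroup W] [InnerProductSpace ℝ W]
    (τ σ s : ℝ) (φp : V → ℝ) (gp : V → V) (φd : W → ℝ) (gd : W → W)
    (A : V →L[ℝ] W) (x : V) (z : W) (x' : V) (z' : W) : ℝ :=
  (1/τ) * breg φp gp x x' + (1/σ) * breg φd gd z z' + s * ⟪z - z', A (x - x')⟫

theorem stmt4 {n m : ℕ}
    (f : EuclideanSpace ℝ (Fin n) → ℝ) (domf : Set (EuclideanSpace ℝ (Fin n)))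
    (hf : ConvexOn ℝ domf f)
    (gs : EuclideanSpace ℝ (Fin m) → ℝ) (domgs : Set (EuclideanSpace ℝ (Fin m)))
    (hgs : ConvexOn ℝ domgs gs)
    (h : EuclideanSpace ℝ (Fin n) → ℝ)
    (gh : EuclideanSpace ℝ (Fin n) → EuclideanSpace ℝ (Fin n))
    (hhconv : ConvexOn ℝ Set.univ h)
    (hhgrad : ∀ x, HasGradientAt h (gh x) x)
    (A : EuclideanSpace ℝ (Fin n) →L[ℝ] EuclideanSpace ℝ (Fin m))
    (φp : EuclideanSpace ℝ (Fin n) → ℝ)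
    (gp : EuclideanSpace ℝ (Fin n) → EuclideanSpace ℝ (Fin n))
    (domp : Set (EuclideanSpace ℝ (Fin n)))
    (hpconv : ConvexOn ℝ domp φp)
    (hgp : ∀ u ∈ interior domp, HasGradientAt φp (gp u) u)
    (φd : EuclideanSpace ℝ (Fin m) → ℝ)
    (gd : EuclideanSpace ℝ (Fin m) → EuclideanSpace ℝ (Fin m))
    (domd : Set (EuclideanSpace ℝ (Fin m)))
    (hdconv : ConvexOn ℝ domd φd)
    (hgd : ∀ u ∈ interior domd, HasGradientAt φd (gd u) u)
    (σ τ : ℝ) (hσ : 0 < σ) (hτ : 0 < τ)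
    (x0 x1 : EuclideanSpace ℝ (Fin n)) (z0 z1 : EuclideanSpace ℝ (Fin m))
    (hx0 : x0 ∈ interior domp) (hz0 : z0 ∈ interior domd)
    (hx1 : x1 ∈ interior domp) (hz1 : z1 ∈ interior domd)
    (hx1f : x1 ∈ domf) (hz1g : z1 ∈ domgs)
    -- (i) optimality of the primal Bregman prox step
    (hprimal : ∀ x ∈ domf ∩ domp,
      τ * (f x1 - f x) ≤
        breg φp gp x x0 - breg φp gp x1 x0 - breg φp gp x x1
          + τ * ⟪(ContinuousLinearMap.adjoint A) z0 + gh x0, x - x1⟫)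
    -- (ii) optimality of the dual Bregman prox step
    (hdual : ∀ z ∈ domgs ∩ domd,
      σ * (gs z1 - gs z) ≤
        breg φd gd z z0 - breg φd gd z1 z0 - breg φd gd z z1
          - σ * ⟪z - z1, A ((2:ℝ) • x1 - x0)⟫) :
    ∀ x ∈ domf ∩ domp, ∀ z ∈ domgs ∩ domd,
      (f x1 + h x1 + ⟪z, A x1⟫ - gs z) - (f x + h x + ⟪z1, A x⟫ - gs z1) ≤
        dpm τ σ (-1) φp gp φd gd A x z x0 z0
          - dpm τ σ (-1) φp gp φd gd A x z x1 z1
          - (dpm τ σ (-1) φp gp φd gd A x1 z1 x0 z0 - breg h gh x1 x0) := by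
  intro x hx z hz
  have hτ0 : τ ≠ 0 := hτ.ne'
  have hσ0 : σ ≠ 0 := hσ.ne'
  have hP : f x1 - f x ≤
      (1/τ) * (breg φp gp x x0 - breg φp gp x1 x0 - breg φp gp x x1)
        + ⟪(ContinuousLinearMap.adjoint A) z0 + gh x0, x - x1⟫ := by
    have h1 := mul_le_mul_of_nonneg_left (hprimal x hx) (one_div_pos.mpr hτ).le
    calc f x1 - f x = (1/τ) * (τ * (f x1 - f x)) := by field_simp
      _ ≤ _ := le_trans h1 (le_of_eq (by field_simp))
  have hD : gs z1 - gs z ≤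
      (1/σ) * (breg φd gd z z0 - breg φd gd z1 z0 - breg φd gd z z1)
        - ⟪z - z1, A ((2:ℝ) • x1 - x0)⟫ := by
    have h1 := mul_le_mul_of_nonneg_left (hdual z hz) (one_div_pos.mpr hσ).le
    calc gs z1 - gs z = (1/σ) * (σ * (gs z1 - gs z)) := by field_simp
      _ ≤ _ := le_trans h1 (le_of_eq (by field_simp))
  have hH : h x0 + ⟪gh x0, x - x0⟫ ≤ h x := grad_convex_ineq hhconv (hhgrad x0) x
  simp only [dpm, breg] at hP hD ⊢
  simp only [map_sub, map_smul, inner_sub_left, inner_sub_right, inner_add_left,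
    inner_smul_right, ContinuousLinearMap.adjoint_inner_left] at hP hD hH ⊢
  ring_nf at hP hD hH ⊢
  linarith
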